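/- Coercivity of the strain gradient bilinear form: let a(u,v) = (ℂε(u), ε(v)) + (𝔻∇ε(u), ∇ε(v)) with ℂ_{ijkl} = λδ_{ij}δ_{kl} + 2μδ_{ik}δ_{jl} and 𝔻_{ijklmn} = ι²(λδ_{il}δ_{jk}δ_{mn} + 2μδ_{il}δ_{jm}δ_{ln}), where λ ≥ 0, μ > 0, 0 < ι ≤ 1. Then for all v ∈ [H₀²(Ω)]², a(v,v) ≥ μ(|v|²_{H¹} + ι²|v|²_{H²}), and consequently there exists C(Ω) > 0 depending only on μ and the Poincaré constant of Ω such that a(v,v) ≥ C(Ω)(‖v‖²_{H¹} + ι²|v|²_{H²}). -/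

import Mathlib

open MeasureTheory

noncomputable section

abbrev V2 := EuclideanSpace ℝ (Fin 2)

def e2 (j : Fin 2) : V2 := EuclideanSpace.single j 1

def pd (f : V2 → ℝ) (j : Fin 2) (x : V2) : ℝ := fderiv ℝ f x (e2 j)

lemma pd_zero_of_nmem_tsupport {f : V2 → ℝ} {x : V2} (hx : x ∉ tsupport f) (j : Fin 2) :
    pd f j x = 0 := by
  have h0 : f =ᶠ[nhds x] 0 := by
    filter_upwards [(isClosed_tsupport f).isOpen_compl.mem_nhds hx] with y hy
    exact image_eq_zero_of_notMem_tsupport hy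
  have : fderiv ℝ f x = 0 := by rw [h0.fderiv_eq]; exact fderiv_const_apply 0
  simp [pd, this]

lemma tsupport_pd_subset (f : V2 → ℝ) (j : Fin 2) : tsupport (pd f j) ⊆ tsupport f := by
  apply closure_minimal _ (isClosed_tsupport f)
  intro x hx
  by_contra h
  exact hx (pd_zero_of_nmem_tsupport h j)

lemma contDiff_pd {f : V2 → ℝ} (hf : ContDiff ℝ (⊤ : ℕ∞) f) (j : Fin 2) :
    ContDiff ℝ (⊤ : ℕ∞) (pd f j) :=
  (hf.fderiv_right (m := (⊤:ℕ∞)) (le_of_eq (by norm_cast))).clm_apply contDiff_const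

lemma pd_comm {f : V2 → ℝ} (hf : ContDiff ℝ (⊤ : ℕ∞) f) (j k : Fin 2) (x : V2) :
    pd (pd f j) k x = pd (pd f k) j x := by
  have hd : DifferentiableAt ℝ (fderiv ℝ f) x :=
    ((hf.fderiv_right (m := (⊤:ℕ∞)) (le_of_eq (by norm_cast))).differentiable (by simp)) x
  have e1 : ∀ j k : Fin 2, pd (pd f j) k x = fderiv ℝ (fderiv ℝ f) x (e2 k) (e2 j) := by
    intro j k
    show fderiv ℝ (fun y => fderiv ℝ f y (e2 j)) x (e2 k) = _
    rw [fderiv_clm_apply hd (differentiableAt_const _)]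
    simp
  have hs : IsSymmSndFDerivAt ℝ f x := (hf.contDiffAt).isSymmSndFDerivAt (by rw [minSmoothness_of_isRCLikeNormedField]; exact WithTop.coe_le_coe.mpr le_top)
  rw [e1, e1, hs]

lemma hcs_pd {f : V2 → ℝ} (h2f : HasCompactSupport f) (j : Fin 2) :
    HasCompactSupport (pd f j) :=
  h2f.mono' ((subset_tsupport _).trans (tsupport_pd_subset f j))

lemma ibp {f g : V2 → ℝ} (hf : ContDiff ℝ (⊤ : ℕ∞) f) (h2f : HasCompactSupport f)
    (hg : ContDiff ℝ (⊤ : ℕ∞) g) (h2g : HasCompactSupport g) (j : Fin 2) :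
    ∫ x, f x * pd g j x = - ∫ x, pd f j x * g x := by
  have h1 : Integrable (fun x => fderiv ℝ f x (e2 j) * g x) :=
    (((contDiff_pd hf j).continuous.mul hg.continuous)).integrable_of_hasCompactSupport
      ((hcs_pd h2f j).mul_right)
  have h2 : Integrable (fun x => f x * fderiv ℝ g x (e2 j)) :=
    ((hf.continuous.mul (contDiff_pd hg j).continuous)).integrable_of_hasCompactSupport
      (h2f.mul_right)
  have h3 : Integrable (fun x => f x * g x) :=
    (hf.continuous.mul hg.continuous).integrable_of_hasCompactSupport h2f.mul_right
  exact integral_mul_fderiv_eq_neg_fderiv_mul_of_integrable h1 h2 h3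
    (fun x _ => hf.differentiable (by simp) x)
    (fun x _ => hg.differentiable (by simp) x)

lemma keyId {f g : V2 → ℝ} (hf : ContDiff ℝ (⊤ : ℕ∞) f) (h2f : HasCompactSupport f)
    (hg : ContDiff ℝ (⊤ : ℕ∞) g) (h2g : HasCompactSupport g) (j k : Fin 2) :
    ∫ x, pd f k x * pd g j x = ∫ x, pd f j x * pd g k x := by
  have h1 : ∫ x, f x * pd (pd g j) k x = - ∫ x, pd f k x * pd g j x :=
    ibp hf h2f (contDiff_pd hg j) (hcs_pd h2g j) k
  have h2 : ∫ x, f x * pd (pd g k) j x = - ∫ x, pd f j x * pd g k x :=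
    ibp hf h2f (contDiff_pd hg k) (hcs_pd h2g k) j
  have h3 : ∫ x, f x * pd (pd g j) k x = ∫ x, f x * pd (pd g k) j x := by
    congr 1; funext x; rw [pd_comm hg j k x]
  rw [h3, h2] at h1
  linarith

lemma korn_aux (w : Fin 2 → V2 → ℝ) (hw : ∀ j, ContDiff ℝ (⊤ : ℕ∞) (w j))
    (h2w : ∀ j, HasCompactSupport (w j)) :
    ∫ x, ∑ j, ∑ k, (pd (w j) k x) ^ 2 ≤
      ∫ x, 2 * ∑ j, ∑ k, ((pd (w j) k x + pd (w k) j x) / 2) ^ 2 := by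
  set a : Fin 2 → Fin 2 → V2 → ℝ := fun j k => pd (w j) k with ha
  have hcont : ∀ j k, Continuous (a j k) := fun j k => (contDiff_pd (hw j) k).continuous
  have hcs : ∀ j k, HasCompactSupport (a j k) := fun j k => hcs_pd (h2w j) k
  have hint : ∀ j k l m : Fin 2, Integrable (fun x => a j k x * a l m x) := fun j k l m =>
    ((hcont j k).mul (hcont l m)).integrable_of_hasCompactSupport ((hcs j k).mul_right)
  have hint2 : ∀ j k, Integrable (fun x => a j k x ^ 2) := by
    intro j k; simpa [pow_two] using hint j k j k
  have hintAux : ∀ j k, Integrable (fun x => a k j x ^ 2 / 4 + a j k x * a k j x / 2) := by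
    intro j k
    exact ((hint2 k j).div_const 4).add ((hint j k k j).div_const 2)
  have hintBig : ∀ j k, Integrable
      (fun x => a j k x ^ 2 / 4 + (a k j x ^ 2 / 4 + a j k x * a k j x / 2)) := by
    intro j k
    exact ((hint2 j k).div_const 4).add (hintAux j k)
  have hintEps : ∀ j k, Integrable (fun x => ((a j k x + a k j x) / 2) ^ 2) := by
    intro j k
    exact (hintBig j k).congr (Filter.Eventually.of_forall fun x => by ring)
  set A : Fin 2 → Fin 2 → ℝ := fun j k => ∫ x, a j k x ^ 2 with hA
  set D : Fin 2 → Fin 2 → ℝ := fun j k => ∫ x, a j j x * a k k x with hD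
  have key : ∀ j k, ∫ x, a j k x * a k j x = D j k := fun j k =>
    keyId (hw j) (h2w j) (hw k) (h2w k) j k
  have heps : ∀ j k, ∫ x, ((a j k x + a k j x) / 2) ^ 2 = A j k / 4 + A k j / 4 + D j k / 2 := by
    intro j k
    have e : (fun x => ((a j k x + a k j x) / 2) ^ 2)
        = fun x => a j k x ^ 2 / 4 + (a k j x ^ 2 / 4 + (a j k x * a k j x) / 2) := by
      funext x; ring
    rw [e, integral_add ((hint2 j k).div_const 4) (hintAux j k),
      integral_add ((hint2 k j).div_const 4) ((hint j k k j).div_const 2),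
      integral_div, integral_div, integral_div, key]
    ring
  have hR : ∫ x, 2 * ∑ j, ∑ k, ((a j k x + a k j x) / 2) ^ 2
      = 2 * ∑ j, ∑ k, (A j k / 4 + A k j / 4 + D j k / 2) := by
    rw [integral_const_mul]
    congr 1
    rw [integral_finset_sum _ (fun j _ => integrable_finset_sum _ (fun k _ => hintEps j k))]
    refine Finset.sum_congr rfl fun j _ => ?_
    rw [integral_finset_sum _ (fun k _ => hintEps j k)]
    exact Finset.sum_congr rfl fun k _ => heps j k
  have hL : ∫ x, ∑ j, ∑ k, a j k x ^ 2 = ∑ j, ∑ k, A j k := by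
    rw [integral_finset_sum _ (fun j _ => integrable_finset_sum _ (fun k _ => hint2 j k))]
    exact Finset.sum_congr rfl fun j _ =>
      integral_finset_sum _ (fun k _ => hint2 j k)
  have hDnn : 0 ≤ ∑ j, ∑ k, D j k := by
    have e1 : ∑ j, ∑ k, D j k = ∫ x, (∑ j, a j j x) ^ 2 := by
      have e2 : (fun x => (∑ j, a j j x) ^ 2)
          = fun x => ∑ j, ∑ k, a j j x * a k k x := by
        funext x; rw [pow_two, Finset.sum_mul_sum]
      rw [e2, integral_finset_sum _ (fun j _ => integrable_finset_sum _ (fun k _ => hint j j k k))]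
      exact (Finset.sum_congr rfl fun j _ =>
        (integral_finset_sum _ (fun k _ => hint j j k k))).symm
    rw [e1]
    exact integral_nonneg fun x => sq_nonneg _
  have hswap : ∑ j, ∑ k, A k j = ∑ j, ∑ k, A j k := Finset.sum_comm
  rw [hL, hR]
  have expand : ∑ j, ∑ k, (A j k / 4 + A k j / 4 + D j k / 2)
      = (∑ j, ∑ k, A j k) / 4 + (∑ j, ∑ k, A k j) / 4 + (∑ j, ∑ k, D j k) / 2 := by
    simp [Finset.sum_add_distrib, Finset.sum_div]
    ring
  rw [expand, hswap]
  linarith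

lemma pd_add {f g : V2 → ℝ} {x : V2} (hf : DifferentiableAt ℝ f x)
    (hg : DifferentiableAt ℝ g x) (j : Fin 2) :
    pd (fun y => f y + g y) j x = pd f j x + pd g j x := by
  simp [pd, fderiv_fun_add hf hg]

lemma pd_div_const {f : V2 → ℝ} {x : V2} (hf : DifferentiableAt ℝ f x) (c : ℝ) (j : Fin 2) :
    pd (fun y => f y / c) j x = pd f j x / c := by
  simp only [div_eq_mul_inv]
  simp [pd, fderiv_mul_const hf c⁻¹, mul_comm]

lemma pd_sum {f : Fin 2 → V2 → ℝ} {x : V2} (hf : ∀ i, DifferentiableAt ℝ (f i) x) (j : Fin 2) :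
    pd (fun y => ∑ i, f i y) j x = ∑ i, pd (f i) j x := by
  simp only [Fin.sum_univ_two]
  exact pd_add (hf 0) (hf 1) j


def grad (v : V2 → V2) (x : V2) (j k : Fin 2) : ℝ := pd (fun y => v y j) k x

def epsF (v : V2 → V2) (j k : Fin 2) : V2 → ℝ :=
  fun x => (grad v x j k + grad v x k j) / 2

def divF (v : V2 → V2) : V2 → ℝ := fun x => ∑ j, grad v x j j

/-- the strain gradient energy
`a(v,v) = 2μ‖ε(v)‖² + λ‖∇·v‖² + ι²(2μ‖∇ε(v)‖² + λ‖∇(∇·v)‖²)`, i.e.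
`(ℂε(v),ε(v)) + (𝔻∇ε(v),∇ε(v))` for the tensors
`ℂ_{ijkl} = λδ_{ij}δ_{kl} + 2μδ_{ik}δ_{jl}`,
`𝔻_{ijklmn} = ι²(λδ_{il}δ_{jk}δ_{mn} + 2μδ_{il}δ_{jm}δ_{ln})`. -/
def aForm (lam mu iot : ℝ) (Ω : Set V2) (v : V2 → V2) : ℝ :=
  (∫ x in Ω, (2 * mu * ∑ j, ∑ k, (epsF v j k x) ^ 2 + lam * (divF v x) ^ 2)) +
    iot ^ 2 *
      ∫ x in Ω, (2 * mu * ∑ i, ∑ j, ∑ k, (pd (epsF v j k) i x) ^ 2 +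
        lam * ∑ i, (pd (divF v) i x) ^ 2)

/-- the squared `L²` norm of `v` -/
def L2sq (Ω : Set V2) (v : V2 → V2) : ℝ := ∫ x in Ω, ∑ j, (v x j) ^ 2

/-- the squared `H¹` seminorm `|v|²_{H¹}` -/
def semi1 (Ω : Set V2) (v : V2 → V2) : ℝ := ∫ x in Ω, ∑ j, ∑ k, (grad v x j k) ^ 2

/-- the squared `H²` seminorm `|v|²_{H²}` -/
def semi2 (Ω : Set V2) (v : V2 → V2) : ℝ :=
  ∫ x in Ω, ∑ i, ∑ j, ∑ k, (pd (fun y => grad v y k j) i x) ^ 2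

/-- Coercivity of the strain gradient bilinear form on `[H₀²(Ω)]²` (stated for smooth
vector fields compactly supported in `Ω`): `a(v,v) ≥ μ(|v|²_{H¹} + ι²|v|²_{H²})`, and
there is `C(Ω) > 0` depending only on `μ` and the Poincaré constant `C_p` such that
`a(v,v) ≥ C(Ω)(‖v‖²_{H¹} + ι²|v|²_{H²})`. -/
theorem stmt4 (Ω : Set V2) (hΩo : IsOpen Ω) (hΩb : Bornology.IsBounded Ω)
    (lam mu iot Cp : ℝ) (hlam : 0 ≤ lam) (hmu : 0 < mu) (hiot : 0 < iot ∧ iot ≤ 1)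
    (hCp : 0 < Cp)
    (hPoincare : ∀ f : V2 → ℝ, ContDiff ℝ (⊤ : ℕ∞) f → HasCompactSupport f →
      tsupport f ⊆ Ω →
      (∫ x in Ω, (f x) ^ 2) ≤ Cp ^ 2 * ∫ x in Ω, ∑ j, (pd f j x) ^ 2) :
    ∃ C > 0, ∀ v : V2 → V2, ContDiff ℝ (⊤ : ℕ∞) v → HasCompactSupport v →
      tsupport v ⊆ Ω →
      mu * (semi1 Ω v + iot ^ 2 * semi2 Ω v) ≤ aForm lam mu iot Ω v ∧
      C * ((L2sq Ω v + semi1 Ω v) + iot ^ 2 * semi2 Ω v) ≤ aForm lam mu iot Ω v := by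
  obtain ⟨hiot0, hiot1⟩ := hiot
  have hCpos : 0 < mu / (1 + Cp ^ 2) := by positivity
  refine ⟨mu / (1 + Cp ^ 2), hCpos, ?_⟩
  intro v hv h2v hts
  -- components
  have hCD : ∀ j, ContDiff ℝ (⊤ : ℕ∞) (fun y => v y j) := fun j => contDiff_euclidean.mp hv j
  have hCS : ∀ j, HasCompactSupport (fun y => v y j) := fun j =>
    h2v.comp_left (g := fun w : V2 => w j) rfl
  have ht_cmp : ∀ j, tsupport (fun y => v y j) ⊆ tsupport v := fun j =>
    closure_minimal
      (fun y hy => subset_tsupport v fun h0 => hy (show v y j = 0 by rw [h0]; rfl))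
      (isClosed_tsupport v)
  have hΩv : ∀ x, x ∉ Ω → x ∉ tsupport v := fun x hx h => hx (hts h)
  have hP1cd : ∀ j k, ContDiff ℝ (⊤ : ℕ∞) (pd (fun y => v y j) k) := fun j k =>
    contDiff_pd (hCD j) k
  have hP1cs : ∀ j k, HasCompactSupport (pd (fun y => v y j) k) := fun j k =>
    hcs_pd (hCS j) k
  have hdiff1 : ∀ j k x, DifferentiableAt ℝ (pd (fun y => v y j) k) x := fun j k x =>
    ((hP1cd j k).differentiable (by simp)) x
  have hP2cd : ∀ i j k, ContDiff ℝ (⊤ : ℕ∞) (pd (pd (fun y => v y j) k) i) := fun i j k =>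
    contDiff_pd (hP1cd j k) i
  -- vanishing
  have hvan0 : ∀ j x, x ∉ tsupport v → v x j = 0 := fun j x hx => by
    rw [image_eq_zero_of_notMem_tsupport hx]; rfl
  have hvan1 : ∀ (j k : Fin 2) (x : V2), x ∉ tsupport v → pd (fun y => v y j) k x = 0 :=
    fun j k x hx => pd_zero_of_nmem_tsupport (fun h => hx (ht_cmp j h)) k
  have hvan2 : ∀ (i j k : Fin 2) (x : V2), x ∉ tsupport v →
      pd (pd (fun y => v y j) k) i x = 0 :=
    fun i j k x hx =>
      pd_zero_of_nmem_tsupport (fun h => hx (ht_cmp j (tsupport_pd_subset _ k h))) i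
  -- pointwise forms
  have heps_pt : ∀ j k (x : V2), epsF v j k x
      = (pd (fun y => v y j) k x + pd (fun y => v y k) j x) / 2 := fun _ _ _ => rfl
  have hdiv_pt : ∀ x : V2, divF v x = ∑ j, pd (fun y => v y j) j x := fun _ => rfl
  have hpdeps : ∀ (i j k : Fin 2) (x : V2), pd (epsF v j k) i x
      = (pd (pd (fun y => v y j) k) i x + pd (pd (fun y => v y k) j) i x) / 2 := by
    intro i j k x
    have e : epsF v j k
        = fun y => (pd (fun z => v z j) k y + pd (fun z => v z k) j y) / 2 := rfl
    rw [e, pd_div_const (f := fun y => pd (fun z => v z j) k y + pd (fun z => v z k) j y)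
        ((hdiff1 j k x).add (hdiff1 k j x)) 2 i,
      pd_add (hdiff1 j k x) (hdiff1 k j x) i]
  have hpddiv : ∀ (i : Fin 2) (x : V2), pd (divF v) i x
      = ∑ j, pd (pd (fun y => v y j) j) i x := by
    intro i x
    have e : divF v = fun y => ∑ j, pd (fun z => v z j) j y := rfl
    rw [e, pd_sum (fun j => hdiff1 j j x) i]
  -- integrability helper
  have mk : ∀ f : V2 → ℝ, Continuous f → (∀ x, x ∉ tsupport v → f x = 0) → Integrable f :=
    fun f hc hz => hc.integrable_of_hasCompactSupport
      (h2v.mono' fun x hx => by by_contra h; exact hx (hz x h))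
  have i0 : ∀ j, Integrable (fun x => (v x j) ^ 2) := fun j =>
    mk _ (((hCD j).continuous).pow 2) (fun x hx => by rw [hvan0 j x hx]; ring)
  have i1 : ∀ j k, Integrable (fun x => pd (fun y => v y j) k x ^ 2) := fun j k =>
    mk _ (((hP1cd j k).continuous).pow 2) (fun x hx => by rw [hvan1 j k x hx]; ring)
  have i1e : ∀ j k, Integrable
      (fun x => ((pd (fun y => v y j) k x + pd (fun y => v y k) j x) / 2) ^ 2) := fun j k =>
    mk _ (((((hP1cd j k).continuous).add ((hP1cd k j).continuous)).div_const 2).pow 2)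
      (fun x hx => by rw [hvan1 j k x hx, hvan1 k j x hx]; ring)
  have i1d : Integrable (fun x => (∑ j, pd (fun y => v y j) j x) ^ 2) :=
    mk _ ((continuous_finset_sum _ fun j _ => (hP1cd j j).continuous).pow 2)
      (fun x hx => by simp [hvan1 _ _ x hx])
  have i2 : ∀ i j k, Integrable (fun x => pd (pd (fun y => v y j) k) i x ^ 2) := fun i j k =>
    mk _ (((hP2cd i j k).continuous).pow 2) (fun x hx => by rw [hvan2 i j k x hx]; ring)
  have i2e : ∀ i j k, Integrable
      (fun x => ((pd (pd (fun y => v y j) k) i x + pd (pd (fun y => v y k) j) i x) / 2) ^ 2) :=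
    fun i j k =>
    mk _ (((((hP2cd i j k).continuous).add ((hP2cd i k j).continuous)).div_const 2).pow 2)
      (fun x hx => by rw [hvan2 i j k x hx, hvan2 i k j x hx]; ring)
  have i2d : ∀ i, Integrable (fun x => (∑ j, pd (pd (fun y => v y j) j) i x) ^ 2) := fun i =>
    mk _ ((continuous_finset_sum _ fun j _ => (hP2cd i j j).continuous).pow 2)
      (fun x hx => by simp [hvan2 _ _ _ x hx])
  -- set-integral conversions
  have hsemi1 : semi1 Ω v = ∫ x, ∑ j, ∑ k, pd (fun y => v y j) k x ^ 2 := by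
    have e := setIntegral_eq_integral_of_forall_compl_eq_zero (μ := volume) (s := Ω)
      (f := fun x => ∑ j, ∑ k, pd (fun y => v y j) k x ^ 2)
      (fun x hx => by simp [hvan1 _ _ x (hΩv x hx)])
    exact e
  have hsemi2 : semi2 Ω v = ∫ x, ∑ i, ∑ j, ∑ k, pd (pd (fun y => v y j) k) i x ^ 2 := by
    have e := setIntegral_eq_integral_of_forall_compl_eq_zero (μ := volume) (s := Ω)
      (f := fun x => ∑ i, ∑ j, ∑ k, pd (pd (fun y => v y k) j) i x ^ 2)
      (fun x hx => by simp [hvan2 _ _ _ x (hΩv x hx)])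
    have e2 : (∫ x, ∑ i, ∑ j, ∑ k, pd (pd (fun y => v y k) j) i x ^ 2)
        = ∫ x, ∑ i, ∑ j, ∑ k, pd (pd (fun y => v y j) k) i x ^ 2 := by
      congr 1
      funext x
      exact Finset.sum_congr rfl fun i _ => Finset.sum_comm
    rw [← e2]
    exact e
  have hL2 : L2sq Ω v = ∑ j, ∫ x, (v x j) ^ 2 := by
    have e := setIntegral_eq_integral_of_forall_compl_eq_zero (μ := volume) (s := Ω)
      (f := fun x => ∑ j, (v x j) ^ 2)
      (fun x hx => by simp [hvan0 _ x (hΩv x hx)])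
    rw [show L2sq Ω v = ∫ x in Ω, ∑ j, (v x j) ^ 2 from rfl, e,
      integral_finset_sum _ fun j _ => i0 j]
  -- aForm decomposition
  have hA : aForm lam mu iot Ω v =
      2 * mu * (∫ x, ∑ j, ∑ k,
        ((pd (fun y => v y j) k x + pd (fun y => v y k) j x) / 2) ^ 2)
      + lam * (∫ x, (∑ j, pd (fun y => v y j) j x) ^ 2)
      + iot ^ 2 * (2 * mu * (∫ x, ∑ i, ∑ j, ∑ k,
          ((pd (pd (fun y => v y j) k) i x + pd (pd (fun y => v y k) j) i x) / 2) ^ 2)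
        + lam * (∫ x, ∑ i, (∑ j, pd (pd (fun y => v y j) j) i x) ^ 2)) := by
    have c1 : (∫ x in Ω, (2 * mu * ∑ j, ∑ k, (epsF v j k x) ^ 2 + lam * (divF v x) ^ 2))
        = 2 * mu * (∫ x, ∑ j, ∑ k,
            ((pd (fun y => v y j) k x + pd (fun y => v y k) j x) / 2) ^ 2)
          + lam * (∫ x, (∑ j, pd (fun y => v y j) j x) ^ 2) := by
      rw [setIntegral_eq_integral_of_forall_compl_eq_zero (μ := volume) (s := Ω)
        (f := fun x => 2 * mu * ∑ j, ∑ k, (epsF v j k x) ^ 2 + lam * (divF v x) ^ 2)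
        (fun x hx => by
          simp [heps_pt, hdiv_pt, hvan1 _ _ x (hΩv x hx)])]
      simp only [heps_pt, hdiv_pt]
      rw [integral_add
          ((integrable_finset_sum _ fun j _ =>
            integrable_finset_sum _ fun k _ => i1e j k).const_mul (2 * mu))
          (i1d.const_mul lam),
        integral_const_mul, integral_const_mul]
    have c2 : (∫ x in Ω, (2 * mu * ∑ i, ∑ j, ∑ k, (pd (epsF v j k) i x) ^ 2 +
          lam * ∑ i, (pd (divF v) i x) ^ 2))
        = 2 * mu * (∫ x, ∑ i, ∑ j, ∑ k,
            ((pd (pd (fun y => v y j) k) i x + pd (pd (fun y => v y k) j) i x) / 2) ^ 2)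
          + lam * (∫ x, ∑ i, (∑ j, pd (pd (fun y => v y j) j) i x) ^ 2) := by
      rw [setIntegral_eq_integral_of_forall_compl_eq_zero (μ := volume) (s := Ω)
        (f := fun x => 2 * mu * ∑ i, ∑ j, ∑ k, (pd (epsF v j k) i x) ^ 2 +
          lam * ∑ i, (pd (divF v) i x) ^ 2)
        (fun x hx => by
          simp [hpdeps, hpddiv, hvan2 _ _ _ x (hΩv x hx)])]
      simp only [hpdeps, hpddiv]
      rw [integral_add
          ((integrable_finset_sum _ fun i _ => integrable_finset_sum _ fun j _ =>
            integrable_finset_sum _ fun k _ => i2e i j k).const_mul (2 * mu))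
          ((integrable_finset_sum _ fun i _ => i2d i).const_mul lam),
        integral_const_mul, integral_const_mul]
    show (∫ x in Ω, (2 * mu * ∑ j, ∑ k, (epsF v j k x) ^ 2 + lam * (divF v x) ^ 2)) +
      iot ^ 2 * ∫ x in Ω, (2 * mu * ∑ i, ∑ j, ∑ k, (pd (epsF v j k) i x) ^ 2 +
        lam * ∑ i, (pd (divF v) i x) ^ 2) = _
    rw [c1, c2]
  -- Korn inequalities
  have K1 : (∫ x, ∑ j, ∑ k, pd (fun y => v y j) k x ^ 2)
      ≤ 2 * ∫ x, ∑ j, ∑ k,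
        ((pd (fun y => v y j) k x + pd (fun y => v y k) j x) / 2) ^ 2 := by
    have h := korn_aux (fun j => fun y => v y j) hCD hCS
    rwa [integral_const_mul] at h
  have K2 : (∫ x, ∑ i, ∑ j, ∑ k, pd (pd (fun y => v y j) k) i x ^ 2)
      ≤ 2 * ∫ x, ∑ i, ∑ j, ∑ k,
        ((pd (pd (fun y => v y j) k) i x + pd (pd (fun y => v y k) j) i x) / 2) ^ 2 := by
    have kor : ∀ i, (∫ x, ∑ j, ∑ k, pd (pd (fun y => v y j) k) i x ^ 2)
        ≤ 2 * ∫ x, ∑ j, ∑ k,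
          ((pd (pd (fun y => v y j) k) i x + pd (pd (fun y => v y k) j) i x) / 2) ^ 2 := by
      intro i
      have h := korn_aux (fun j => pd (fun y => v y j) i)
        (fun j => contDiff_pd (hCD j) i) (fun j => hcs_pd (hCS j) i)
      rw [integral_const_mul] at h
      have e1 : ∀ (j k : Fin 2) (x : V2),
          pd (pd (fun y => v y j) i) k x = pd (pd (fun y => v y j) k) i x :=
        fun j k x => pd_comm (hCD j) i k x
      simp only [e1] at h
      exact h
    calc (∫ x, ∑ i, ∑ j, ∑ k, pd (pd (fun y => v y j) k) i x ^ 2)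
        = ∑ i, ∫ x, ∑ j, ∑ k, pd (pd (fun y => v y j) k) i x ^ 2 :=
          integral_finset_sum _ fun i _ => integrable_finset_sum _ fun j _ =>
            integrable_finset_sum _ fun k _ => i2 i j k
      _ ≤ ∑ i, 2 * ∫ x, ∑ j, ∑ k,
            ((pd (pd (fun y => v y j) k) i x + pd (pd (fun y => v y k) j) i x) / 2) ^ 2 :=
          Finset.sum_le_sum fun i _ => kor i
      _ = 2 * ∫ x, ∑ i, ∑ j, ∑ k,
            ((pd (pd (fun y => v y j) k) i x + pd (pd (fun y => v y k) j) i x) / 2) ^ 2 := by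
          rw [← Finset.mul_sum, ← integral_finset_sum _ fun i _ =>
            integrable_finset_sum _ fun j _ => integrable_finset_sum _ fun k _ => i2e i j k]
  -- nonnegativity
  have hIdivnn : 0 ≤ ∫ x, (∑ j, pd (fun y => v y j) j x) ^ 2 :=
    integral_nonneg fun x => sq_nonneg _
  have hIdiv2nn : 0 ≤ ∫ x, ∑ i, (∑ j, pd (pd (fun y => v y j) j) i x) ^ 2 :=
    integral_nonneg fun x => Finset.sum_nonneg fun i _ => sq_nonneg _
  have hT1nn : 0 ≤ ∫ x, ∑ j, ∑ k, pd (fun y => v y j) k x ^ 2 :=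
    integral_nonneg fun x => Finset.sum_nonneg fun j _ => Finset.sum_nonneg fun k _ =>
      sq_nonneg _
  have hT2nn : 0 ≤ ∫ x, ∑ i, ∑ j, ∑ k, pd (pd (fun y => v y j) k) i x ^ 2 :=
    integral_nonneg fun x => Finset.sum_nonneg fun i _ => Finset.sum_nonneg fun j _ =>
      Finset.sum_nonneg fun k _ => sq_nonneg _
  -- Poincare
  have hPo : ∀ j, (∫ x, (v x j) ^ 2) ≤ Cp ^ 2 * ∫ x, ∑ k, pd (fun y => v y j) k x ^ 2 := by
    intro j
    have h := hPoincare (fun y => v y j) (hCD j) (hCS j)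
      (fun y hy => hts (ht_cmp j hy))
    have e1 : (∫ x in Ω, (v x j) ^ 2) = ∫ x, (v x j) ^ 2 :=
      setIntegral_eq_integral_of_forall_compl_eq_zero
        (fun x hx => by rw [hvan0 j x (hΩv x hx)]; ring)
    have e2 : (∫ x in Ω, ∑ k, pd (fun y => v y j) k x ^ 2)
        = ∫ x, ∑ k, pd (fun y => v y j) k x ^ 2 :=
      setIntegral_eq_integral_of_forall_compl_eq_zero
        (fun x hx => by simp [hvan1 _ _ x (hΩv x hx)])
    calc (∫ x, (v x j) ^ 2) = ∫ x in Ω, (v x j) ^ 2 := e1.symm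
      _ ≤ Cp ^ 2 * ∫ x in Ω, ∑ k, pd (fun y => v y j) k x ^ 2 := h
      _ = Cp ^ 2 * ∫ x, ∑ k, pd (fun y => v y j) k x ^ 2 := by rw [e2]
  have hT1split : (∫ x, ∑ j, ∑ k, pd (fun y => v y j) k x ^ 2)
      = ∑ j, ∫ x, ∑ k, pd (fun y => v y j) k x ^ 2 :=
    integral_finset_sum _ fun j _ => integrable_finset_sum _ fun k _ => i1 j k
  have hPsum : (∑ j, ∫ x, (v x j) ^ 2)
      ≤ Cp ^ 2 * ∫ x, ∑ j, ∑ k, pd (fun y => v y j) k x ^ 2 := by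
    calc (∑ j, ∫ x, (v x j) ^ 2)
        ≤ ∑ j, Cp ^ 2 * ∫ x, ∑ k, pd (fun y => v y j) k x ^ 2 :=
          Finset.sum_le_sum fun j _ => hPo j
      _ = Cp ^ 2 * ∑ j, ∫ x, ∑ k, pd (fun y => v y j) k x ^ 2 := by rw [Finset.mul_sum]
      _ = Cp ^ 2 * ∫ x, ∑ j, ∑ k, pd (fun y => v y j) k x ^ 2 := by rw [hT1split]
  -- conclusion
  have hL2nn : 0 ≤ ∑ j, ∫ x, (v x j) ^ 2 :=
    Finset.sum_nonneg fun j _ => integral_nonneg fun x => sq_nonneg _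
  have main : mu * ((∫ x, ∑ j, ∑ k, pd (fun y => v y j) k x ^ 2) +
      iot ^ 2 * ∫ x, ∑ i, ∑ j, ∑ k, pd (pd (fun y => v y j) k) i x ^ 2) ≤
      2 * mu * (∫ x, ∑ j, ∑ k,
        ((pd (fun y => v y j) k x + pd (fun y => v y k) j x) / 2) ^ 2)
      + lam * (∫ x, (∑ j, pd (fun y => v y j) j x) ^ 2)
      + iot ^ 2 * (2 * mu * (∫ x, ∑ i, ∑ j, ∑ k,
          ((pd (pd (fun y => v y j) k) i x + pd (pd (fun y => v y k) j) i x) / 2) ^ 2)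
        + lam * (∫ x, ∑ i, (∑ j, pd (pd (fun y => v y j) j) i x) ^ 2)) := by
    nlinarith [mul_le_mul_of_nonneg_left K1 hmu.le,
      mul_le_mul_of_nonneg_left K2 (mul_nonneg hmu.le (sq_nonneg iot)),
      mul_nonneg hlam hIdivnn,
      mul_nonneg (sq_nonneg iot) (mul_nonneg hlam hIdiv2nn)]
  constructor
  · rw [hsemi1, hsemi2, hA]
    exact main
  · rw [hL2, hsemi1, hsemi2, hA]
    have h6 : mu / (1 + Cp ^ 2) * (1 + Cp ^ 2) = mu :=
      div_mul_cancel₀ mu (by positivity)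
    have h6' : mu / (1 + Cp ^ 2) * (1 + Cp ^ 2) *
        (∫ x, ∑ j, ∑ k, pd (fun y => v y j) k x ^ 2) =
        mu * ∫ x, ∑ j, ∑ k, pd (fun y => v y j) k x ^ 2 := by rw [h6]
    have h7 : mu / (1 + Cp ^ 2) ≤ mu :=
      div_le_self hmu.le (by nlinarith [sq_nonneg Cp])
    have h8 : mu / (1 + Cp ^ 2) * (iot ^ 2 *
        ∫ x, ∑ i, ∑ j, ∑ k, pd (pd (fun y => v y j) k) i x ^ 2)
        ≤ mu * (iot ^ 2 * ∫ x, ∑ i, ∑ j, ∑ k, pd (pd (fun y => v y j) k) i x ^ 2) :=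
      mul_le_mul_of_nonneg_right h7 (mul_nonneg (sq_nonneg iot) hT2nn)
    have h5 := mul_le_mul_of_nonneg_left hPsum hCpos.le
    linarith [h5, h6', h8, main]
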